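/- Let u ∈ ℝ^M and v ∈ ℝ^N be unit vectors and σ > 0, and set C = σuvᵀ. Then there exist δ > 0 and Λ ≥ 0 such that for every E ∈ ℝ^{M×N} with ‖E‖_F ≤ δ: | (‖C + E‖_F² − ‖C + E‖_op²) − ‖(I_M − uuᵀ)E(I_N − vvᵀ)‖_F² | ≤ Λ · ‖E‖_F³. (In other words, the squared Frobenius distance of C + E from its best rank-one approximation equals ‖(I_M − uuᵀ)E(I_N − vvᵀ)‖_F² up to a third-order error in the perturbation.) -/
import Mathlib


open scoped BigOperators
open Matrix

noncomputable section

/-- Squared Frobenius norm of a real matrix: `‖A‖_F² = ∑ᵢⱼ A i j ^ 2`. -/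
def frobSq {M N : ℕ} (A : Matrix (Fin M) (Fin N) ℝ) : ℝ := ∑ i, ∑ j, A i j ^ 2

/-- Squared Euclidean norm of a vector. -/
def vnormSq {n : ℕ} (x : Fin n → ℝ) : ℝ := ∑ i, x i ^ 2

/-- The spectral (ℓ²-operator) norm of a real matrix:
`‖A‖_op = sup { ‖Ax‖ : ‖x‖ = 1 }`, which equals the largest singular value. -/
def opNorm {M N : ℕ} (A : Matrix (Fin M) (Fin N) ℝ) : ℝ :=
  sSup {r : ℝ | ∃ x : Fin N → ℝ, vnormSq x = 1 ∧ r = Real.sqrt (vnormSq (A.mulVec x))}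

/-! ### Auxiliary definitions and lemmas -/

set_option maxHeartbeats 1000000

/-- Euclidean inner product of two vectors. -/
def ip {n : ℕ} (x y : Fin n → ℝ) : ℝ := ∑ i, x i * y i

lemma vnormSq_nonneg {n : ℕ} (x : Fin n → ℝ) : 0 ≤ vnormSq x :=
  Finset.sum_nonneg fun _ _ => sq_nonneg _

lemma frobSq_nonneg {M N : ℕ} (A : Matrix (Fin M) (Fin N) ℝ) : 0 ≤ frobSq A :=
  Finset.sum_nonneg fun _ _ => Finset.sum_nonneg fun _ _ => sq_nonneg _

lemma ip_sq_le {n : ℕ} (x y : Fin n → ℝ) : (ip x y) ^ 2 ≤ vnormSq x * vnormSq y :=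
  Finset.sum_mul_sq_le_sq_mul_sq _ x y

lemma mulVec_apply' {M N : ℕ} (A : Matrix (Fin M) (Fin N) ℝ) (x : Fin N → ℝ) (i : Fin M) :
    A.mulVec x i = ∑ j, A i j * x j := rfl

lemma vnormSq_mulVec_le {M N : ℕ} (A : Matrix (Fin M) (Fin N) ℝ) (x : Fin N → ℝ) :
    vnormSq (A.mulVec x) ≤ frobSq A * vnormSq x := by
  unfold vnormSq frobSq
  rw [Finset.sum_mul]
  refine Finset.sum_le_sum fun i _ => ?_
  simpa [mulVec_apply'] using Finset.sum_mul_sq_le_sq_mul_sq Finset.univ (fun j => A i j) x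

lemma opNorm_nonneg {M N : ℕ} (A : Matrix (Fin M) (Fin N) ℝ) : 0 ≤ opNorm A := by
  apply Real.sSup_nonneg
  rintro r ⟨x, hx, rfl⟩
  exact Real.sqrt_nonneg _

lemma bddAbove_opSet {M N : ℕ} (A : Matrix (Fin M) (Fin N) ℝ) :
    BddAbove {r : ℝ | ∃ x : Fin N → ℝ, vnormSq x = 1 ∧ r = Real.sqrt (vnormSq (A.mulVec x))} := by
  refine ⟨Real.sqrt (frobSq A), ?_⟩
  rintro r ⟨x, hx, rfl⟩
  apply Real.sqrt_le_sqrt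
  calc vnormSq (A.mulVec x) ≤ frobSq A * vnormSq x := vnormSq_mulVec_le A x
    _ = frobSq A := by rw [hx, mul_one]

lemma sq_opNorm_ge {M N : ℕ} (A : Matrix (Fin M) (Fin N) ℝ) (x : Fin N → ℝ)
    (hx : vnormSq x = 1) : vnormSq (A.mulVec x) ≤ opNorm A ^ 2 := by
  have h1 : Real.sqrt (vnormSq (A.mulVec x)) ≤ opNorm A :=
    le_csSup (bddAbove_opSet A) ⟨x, hx, rfl⟩
  have h2 : Real.sqrt (vnormSq (A.mulVec x)) ^ 2 = vnormSq (A.mulVec x) :=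
    Real.sq_sqrt (vnormSq_nonneg _)
  calc vnormSq (A.mulVec x) = Real.sqrt (vnormSq (A.mulVec x)) ^ 2 := h2.symm
    _ ≤ opNorm A ^ 2 := by
        apply pow_le_pow_left₀ (Real.sqrt_nonneg _) h1

lemma sq_opNorm_le {M N : ℕ} (A : Matrix (Fin M) (Fin N) ℝ) (U : ℝ) (hU : 0 ≤ U)
    (h : ∀ x : Fin N → ℝ, vnormSq x = 1 → vnormSq (A.mulVec x) ≤ U) : opNorm A ^ 2 ≤ U := by
  have h1 : opNorm A ≤ Real.sqrt U := by
    apply Real.sSup_le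
    · rintro r ⟨x, hx, rfl⟩
      exact Real.sqrt_le_sqrt (h x hx)
    · exact Real.sqrt_nonneg _
  calc opNorm A ^ 2 ≤ Real.sqrt U ^ 2 := pow_le_pow_left₀ (opNorm_nonneg A) h1 2
    _ = U := Real.sq_sqrt hU

lemma ip_comm {n : ℕ} (x y : Fin n → ℝ) : ip x y = ip y x := by
  unfold ip; exact Finset.sum_congr rfl fun i _ => mul_comm _ _

lemma ip_self {n : ℕ} (x : Fin n → ℝ) : ip x x = vnormSq x := by
  unfold ip vnormSq; exact Finset.sum_congr rfl fun i _ => (sq (x i)).symm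

lemma vnormSq_decomp {n : ℕ} (a b : Fin n → ℝ) (s : ℝ) :
    vnormSq (fun i => s * a i + b i) = s^2 * vnormSq a + 2*s*ip a b + vnormSq b := by
  unfold vnormSq ip
  simp only [Finset.mul_sum]
  rw [← Finset.sum_add_distrib, ← Finset.sum_add_distrib]
  exact Finset.sum_congr rfl fun i _ => by ring

lemma ip_lin {n : ℕ} (a b c : Fin n → ℝ) (s : ℝ) :
    ip a (fun i => s * b i + c i) = s * ip a b + ip a c := by
  unfold ip
  simp only [Finset.mul_sum]
  rw [← Finset.sum_add_distrib]
  exact Finset.sum_congr rfl fun i _ => by ring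

lemma vnormSq_smul {n : ℕ} (c : ℝ) (x : Fin n → ℝ) :
    vnormSq (fun i => c * x i) = c^2 * vnormSq x := by
  unfold vnormSq
  rw [Finset.mul_sum]
  exact Finset.sum_congr rfl fun i _ => by ring

lemma mulVec_lin {M N : ℕ} (E : Matrix (Fin M) (Fin N) ℝ) (v y : Fin N → ℝ) (α : ℝ) (i : Fin M) :
    E.mulVec (fun j => α * v j + y j) i = α * E.mulVec v i + E.mulVec y i := by
  simp only [mulVec_apply', Finset.mul_sum]
  rw [← Finset.sum_add_distrib]
  exact Finset.sum_congr rfl fun j _ => by ring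

lemma mulVec_smul' {M N : ℕ} (E : Matrix (Fin M) (Fin N) ℝ) (c : ℝ) (x : Fin N → ℝ) (i : Fin M) :
    E.mulVec (fun j => c * x j) i = c * E.mulVec x i := by
  simp only [mulVec_apply', Finset.mul_sum]
  exact Finset.sum_congr rfl fun j _ => by ring

lemma rankone_mulVec {M N : ℕ} (u : Fin M → ℝ) (v : Fin N → ℝ) (σ : ℝ) (x : Fin N → ℝ) (i : Fin M) :
    (σ • vecMulVec u v).mulVec x i = σ * ip v x * u i := by
  rw [mulVec_apply', ip, Finset.mul_sum, Finset.sum_mul]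
  refine Finset.sum_congr rfl fun j _ => ?_
  simp [vecMulVec_apply]
  ring

lemma transpose_frob {M N : ℕ} (E : Matrix (Fin M) (Fin N) ℝ) : frobSq Eᵀ = frobSq E := by
  unfold frobSq
  rw [Finset.sum_comm]
  rfl

lemma g_eq_transpose_mulVec {M N : ℕ} (E : Matrix (Fin M) (Fin N) ℝ) (u : Fin M → ℝ) :
    (fun j => ∑ i, E i j * u i) = Eᵀ.mulVec u := by
  funext j
  rw [mulVec_apply']
  rfl

lemma ip_swap {M N : ℕ} (E : Matrix (Fin M) (Fin N) ℝ) (u : Fin M → ℝ) (v : Fin N → ℝ) :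
    ip (fun j => ∑ i, E i j * u i) v = ip u (E.mulVec v) := by
  unfold ip
  calc ∑ j, (∑ i, E i j * u i) * v j = ∑ j, ∑ i, E i j * u i * v j := by
        exact Finset.sum_congr rfl fun j _ => by rw [Finset.sum_mul]
    _ = ∑ i, ∑ j, E i j * u i * v j := Finset.sum_comm
    _ = ∑ i, u i * E.mulVec v i := by
        refine Finset.sum_congr rfl fun i _ => ?_
        rw [mulVec_apply', Finset.mul_sum]
        exact Finset.sum_congr rfl fun j _ => by ring

/-- Expansion of the Frobenius norm of `σuvᵀ + E`. -/
lemma frob_expand {M N : ℕ} (u : Fin M → ℝ) (v : Fin N → ℝ)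
    (hu : vnormSq u = 1) (hv : vnormSq v = 1) (σ : ℝ) (E : Matrix (Fin M) (Fin N) ℝ) :
    frobSq (σ • vecMulVec u v + E) = σ^2 + 2*σ*(ip u (E.mulVec v)) + frobSq E := by
  have inner : ∀ i, ∑ j, (σ • vecMulVec u v + E) i j ^2
      = σ^2 * u i^2 * vnormSq v + 2*σ*(u i * (E.mulVec v i)) + ∑ j, E i j^2 := by
    intro i
    rw [vnormSq, mulVec_apply', Finset.mul_sum, Finset.mul_sum, Finset.mul_sum,
      ← Finset.sum_add_distrib, ← Finset.sum_add_distrib]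
    refine Finset.sum_congr rfl fun j _ => ?_
    simp [vecMulVec_apply]
    ring
  unfold frobSq
  rw [Finset.sum_congr rfl fun i _ => inner i, Finset.sum_add_distrib, Finset.sum_add_distrib]
  have h1 : ∑ i, σ^2 * u i^2 * vnormSq v = σ^2 := by
    rw [hv]
    have : ∑ i, σ^2 * u i^2 * 1 = σ^2 * vnormSq u := by
      rw [vnormSq, Finset.mul_sum]; exact Finset.sum_congr rfl fun i _ => by ring
    rw [this, hu, mul_one]
  have h2 : ∑ i, 2*σ*(u i * (E.mulVec v i)) = 2*σ*(ip u (E.mulVec v)) := by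
    rw [ip, Finset.mul_sum]
  rw [h1, h2]

/-- Exact identity for the doubly projected matrix. -/
lemma frob_proj {M N : ℕ} (u : Fin M → ℝ) (v : Fin N → ℝ)
    (hu : vnormSq u = 1) (hv : vnormSq v = 1) (E : Matrix (Fin M) (Fin N) ℝ) :
    frobSq ((1 - vecMulVec u u) * E * (1 - vecMulVec v v))
      = frobSq E - vnormSq (E.mulVec v) - vnormSq (fun j => ∑ i, E i j * u i)
        + (ip u (E.mulVec v))^2 := by
  set F : Matrix (Fin M) (Fin N) ℝ := (1 - vecMulVec u u) * E * (1 - vecMulVec v v) with hFdef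
  set g : Fin N → ℝ := fun j => ∑ i, E i j * u i with hgdef
  set h : Fin M → ℝ := E.mulVec v with hhdef
  set e : ℝ := ip u h with hedef
  set c : Fin M → ℝ := fun i => h i - e * u i with hcdef
  have he' : ip g v = e := ip_swap E u v
  have hegv : (∑ l, g l * v l) = e := he'
  have hhsum : ∀ i, h i = ∑ j, E i j * v j := fun i => mulVec_apply' E v i
  have hesum : (∑ i, u i * h i) = e := by rw [hedef]; rfl
  have husum : (∑ i, u i ^ 2) = 1 := hu
  have hvsum : (∑ j, v j ^ 2) = 1 := hv
  set G : Matrix (Fin M) (Fin N) ℝ := (1 - vecMulVec u u) * E with hGdef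
  have hG : ∀ i' j', G i' j' = E i' j' - u i' * g j' := by
    intro i' j'
    rw [hGdef, Matrix.sub_mul, Matrix.one_mul, Matrix.sub_apply]
    congr 1
    rw [Matrix.mul_apply, hgdef, Finset.mul_sum]
    exact Finset.sum_congr rfl fun k _ => by simp [vecMulVec_apply]; ring
  have hface : ∀ i j, F i j = E i j - u i * g j - c i * v j := by
    intro i j
    rw [hFdef, Matrix.mul_sub, Matrix.mul_one, Matrix.sub_apply, hG]
    congr 1
    rw [Matrix.mul_apply]
    have step : ∀ l, G i l * vecMulVec v v l j = (E i l * v l - u i * (g l * v l)) * v j := by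
      intro l; rw [hG]; simp [vecMulVec_apply]; ring
    rw [Finset.sum_congr rfl fun l _ => step l, ← Finset.sum_mul, hcdef]
    have h1 : ∑ l, (E i l * v l - u i * (g l * v l)) = h i - e * u i := by
      rw [Finset.sum_sub_distrib, ← Finset.mul_sum, hegv, hhsum]
      ring
    rw [h1]
  have inner : ∀ i, ∑ j, F i j ^2
      = (∑ j, E i j^2) + u i^2 * (∑ j, g j^2) + c i^2 * (∑ j, v j^2)
        - 2 * (u i * (∑ j, E i j * g j)) - 2 * (c i * (∑ j, E i j * v j))
        + 2 * ((u i * c i) * (∑ j, g j * v j)) := by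
    intro i
    calc ∑ j, F i j ^2
        = ∑ j, (E i j^2 + u i^2 * g j^2 + c i^2 * v j^2 - 2*(u i * (E i j * g j))
            - 2*(c i * (E i j * v j)) + 2*((u i * c i) * (g j * v j))) :=
          Finset.sum_congr rfl fun j _ => by rw [hface]; ring
      _ = _ := by
          simp only [Finset.sum_add_distrib, Finset.sum_sub_distrib, Finset.mul_sum]
  show frobSq F = _
  unfold frobSq
  rw [Finset.sum_congr rfl fun i _ => inner i]
  simp only [Finset.sum_add_distrib, Finset.sum_sub_distrib]
  have A2 : ∑ i, u i^2 * (∑ j, g j^2) = ∑ j, g j^2 := by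
    rw [← Finset.sum_mul, husum, one_mul]
  have A3 : ∑ i, c i^2 * (∑ j, v j^2) = (∑ i, h i^2) - e^2 := by
    rw [hvsum]
    have hc2 : ∀ i, c i ^2 * 1 = h i^2 - 2*e*(u i * h i) + e^2 * u i^2 := fun i => by
      rw [hcdef]; ring
    rw [Finset.sum_congr rfl fun i _ => hc2 i]
    simp only [Finset.sum_add_distrib, Finset.sum_sub_distrib, ← Finset.mul_sum]
    rw [husum, hesum]
    ring
  have A4 : ∑ i, 2 * (u i * (∑ j, E i j * g j)) = 2 * (∑ j, g j^2) := by
    rw [← Finset.mul_sum]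
    congr 1
    calc ∑ i, u i * ∑ j, E i j * g j = ∑ i, ∑ j, E i j * u i * g j := by
          refine Finset.sum_congr rfl fun i _ => ?_
          rw [Finset.mul_sum]
          exact Finset.sum_congr rfl fun j _ => by ring
      _ = ∑ j, ∑ i, E i j * u i * g j := Finset.sum_comm
      _ = ∑ j, g j ^2 := by
          refine Finset.sum_congr rfl fun j _ => ?_
          rw [← Finset.sum_mul]
          rw [hgdef]
          ring
  have A5 : ∑ i, 2 * (c i * (∑ j, E i j * v j)) = 2 * ((∑ i, h i^2) - e^2) := by
    rw [← Finset.mul_sum]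
    congr 1
    have step : ∀ i, c i * (∑ j, E i j * v j) = h i^2 - e * (u i * h i) := fun i => by
      rw [hcdef, ← hhsum]; ring
    rw [Finset.sum_congr rfl fun i _ => step i, Finset.sum_sub_distrib, ← Finset.mul_sum, hesum]
    ring
  have A6 : ∑ i, 2 * ((u i * c i) * (∑ j, g j * v j)) = 0 := by
    simp only [hegv]
    have step : ∀ i, 2 * ((u i * c i) * e) = 2*e*(u i * h i) - 2*e^2*u i^2 := fun i => by
      rw [hcdef]; ring
    rw [Finset.sum_congr rfl fun i _ => step i, Finset.sum_sub_distrib, ← Finset.mul_sum,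
      ← Finset.mul_sum, hesum, husum]
    ring
  rw [A2, A3, A4, A5, A6]
  have hg' : vnormSq g = ∑ j, g j^2 := rfl
  have hh' : vnormSq h = ∑ i, h i^2 := rfl
  rw [← hg', ← hh']
  ring

/-! ### Scalar inequalities -/

lemma apos (σ ε : ℝ) (hσ : 0 < σ) (hε0 : 0 ≤ ε) (hεσ : ε ≤ σ/4) :
    (0:ℝ) < σ^2 - 2*σ*ε - ε^2 := by nlinarith

lemma cs_le (a b c : ℝ) (h : a^2 ≤ b^2) (hb : 0 ≤ b) (hc : c^2 ≤ 1) : c*a ≤ b := by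
  nlinarith [sq_nonneg a, sq_nonneg (c*a), sq_nonneg c]

lemma stepI_lem (σ ε e H p t α P R W : ℝ)
    (hσ : 0 < σ) (hε0 : 0 ≤ ε) (he2 : e^2 ≤ ε^2) (hH0 : 0 ≤ H)
    (hαt : α^2 + t^2 = 1) (ht0 : 0 ≤ t)
    (s1 : α*P ≤ p*t) (s2 : α*R ≤ ε^2*t) (hW0 : 0 ≤ W) (hW : W ≤ ε^2 * t^2) :
    σ^2*α^2 + 2*σ*α*(α*e + P) + (α^2*H + 2*α*R + W)
      ≤ σ^2 + 2*σ*e + H + (-(σ^2 - 2*σ*ε - ε^2)*t^2 + (2*σ*p + 2*ε^2)*t) := by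
  have hα2' : α^2 = 1 - t^2 := by linarith
  have k1 : σ^2*α^2 = σ^2 - σ^2*t^2 := by linear_combination σ^2 * hα2'
  have k2 : 2*σ*α*(α*e + P) = 2*σ*e*(1 - t^2) + 2*σ*(α*P) := by
    linear_combination 2*σ*e * hα2'
  have k3 : α^2*H ≤ H := by nlinarith [mul_nonneg (sq_nonneg t) hH0]
  have m1 : 2*σ*(α*P) ≤ 2*σ*(p*t) := by nlinarith [mul_le_mul_of_nonneg_left s1 (le_of_lt hσ)]
  have m2 : -(2*σ*e)*t^2 ≤ 2*σ*ε*t^2 := by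
    nlinarith [mul_nonneg (mul_nonneg (le_of_lt hσ) (by nlinarith : (0:ℝ) ≤ e + ε)) (sq_nonneg t)]
  nlinarith [k1, k2, k3, m1, m2, hW, s2]

lemma stepII_lem (a b t : ℝ) (ha : 0 < a) : -a*t^2 + b*t ≤ b^2/(4*a) := by
  rw [le_div_iff₀ (by linarith : (0:ℝ) < 4*a)]
  nlinarith [sq_nonneg (2*a*t - b)]

lemma stepIII_lem (σ ε p p2 : ℝ) (hσ : 0 < σ) (hε0 : 0 ≤ ε) (hεσ : ε ≤ σ/4)
    (hp0 : 0 ≤ p) (hpε : p ≤ ε) (hpsq : p^2 = p2) :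
    (2*σ*p + 2*ε^2)^2/(4*(σ^2 - 2*σ*ε - ε^2)) ≤ p2 + 11/σ*ε^3 := by
  have ha := apos σ ε hσ hε0 hεσ
  rw [div_le_iff₀ (by linarith : (0:ℝ) < 4*(σ^2 - 2*σ*ε - ε^2))]
  have hKσ : (11/σ)*σ = 11 := div_mul_cancel₀ _ (ne_of_gt hσ)
  have hK0 : (0:ℝ) ≤ 11/σ := by positivity
  set K := 11/σ with hK
  have hKε : K*ε ≤ 11/4 := by nlinarith
  have f1 : σ*p*ε^2 ≤ σ*ε^3 := by nlinarith [mul_nonneg (le_of_lt hσ) (sq_nonneg ε)]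
  have hp2e : p^2 ≤ ε^2 := by nlinarith
  have f2 : σ*ε*p^2 ≤ σ*ε^3 := by
    nlinarith [mul_le_mul_of_nonneg_left hp2e (mul_nonneg (le_of_lt hσ) hε0)]
  have f3 : ε^2*p^2 ≤ ε^4 := by nlinarith [sq_nonneg ε, mul_nonneg hp0 hε0]
  have f4 : ε^4 ≤ σ*ε^3/4 := by nlinarith [mul_nonneg (mul_nonneg hε0 hε0) hε0]
  have hε4 : (0:ℝ) ≤ ε^4 := by positivity
  have f5 : K*ε^5 ≤ (11/4)*ε^4 := by nlinarith [mul_le_mul_of_nonneg_right hKε hε4]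
  have f6 : K*ε^4*σ = 11*ε^4 := by nlinarith [hKσ]
  have f7 : K*ε^3*σ^2 = 11*σ*ε^3 := by
    have h8 : K*σ*(σ*ε^3) = 11*(σ*ε^3) := by rw [hKσ]
    nlinarith [h8]
  rw [← hpsq]
  nlinarith [f1, f2, f3, f4, f5, f6, f7]

lemma upper_endgame (σ ε e H p2 p α t P R W : ℝ)
    (hσ : 0 < σ) (hε0 : 0 ≤ ε) (hεσ : ε ≤ σ/4)
    (he2 : e^2 ≤ ε^2) (hH0 : 0 ≤ H) (hH : H ≤ ε^2)
    (hp0 : 0 ≤ p) (hpε : p ≤ ε) (hpsq : p^2 = p2)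
    (hαt : α^2 + t^2 = 1) (ht0 : 0 ≤ t)
    (hP2 : P^2 ≤ p2 * t^2) (hW0 : 0 ≤ W) (hW : W ≤ ε^2 * t^2) (hR2 : R^2 ≤ ε^2 * W) :
    σ^2*α^2 + 2*σ*α*(α*e + P) + (α^2*H + 2*α*R + W)
      ≤ σ^2 + 2*σ*e + H + p2 + 11/σ*ε^3 := by
  have hα2 : α^2 ≤ 1 := by nlinarith [sq_nonneg t]
  have s1 : α*P ≤ p*t := by
    refine cs_le P (p*t) α ?_ (mul_nonneg hp0 ht0) hα2
    have : (p*t)^2 = p2*t^2 := by rw [mul_pow, hpsq]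
    linarith [hP2]
  have s2 : α*R ≤ ε^2*t := by
    refine cs_le R (ε^2*t) α ?_ (mul_nonneg (sq_nonneg ε) ht0) hα2
    have h9 : (ε^2*t)^2 = ε^2*(ε^2*t^2) := by ring
    have h10 : ε^2*W ≤ ε^2*(ε^2*t^2) := mul_le_mul_of_nonneg_left hW (sq_nonneg ε)
    linarith [hR2]
  have ha := apos σ ε hσ hε0 hεσ
  have SI := stepI_lem σ ε e H p t α P R W hσ hε0 he2 hH0 hαt ht0 s1 s2 hW0 hW
  have SII := stepII_lem (σ^2 - 2*σ*ε - ε^2) (2*σ*p + 2*ε^2) t ha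
  have SIII := stepIII_lem σ ε p p2 hσ hε0 hεσ hp0 hpε hpsq
  linarith

lemma lower_endgame (σ ε e H p2 R' M' ι : ℝ)
    (hσ : 0 < σ) (hε0 : 0 ≤ ε) (hεσ : ε ≤ σ/4)
    (he2 : e^2 ≤ ε^2) (hH0 : 0 ≤ H) (hH : H ≤ ε^2)
    (hp20 : 0 ≤ p2) (hp2ε : p2 ≤ ε^2)
    (hM0 : 0 ≤ M') (hM : M' ≤ ε^2 * p2) (hR2 : R'^2 ≤ H * M')
    (hι : ι*σ = 1) (hι0 : 0 ≤ ι) :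
    (σ^2 + 2*σ*e + H + p2 - 5*ι*ε^3) * (1 + ι^2*p2)
      ≤ σ^2 + 2*σ*(e + ι*p2) + (H + 2*ι*R' + ι^2*M') := by
  have hιε : ι*ε ≤ 1/4 := by nlinarith
  have hsp2 : Real.sqrt p2 ^2 = p2 := Real.sq_sqrt hp20
  have hsp0 : 0 ≤ Real.sqrt p2 := Real.sqrt_nonneg _
  have hsp : Real.sqrt p2 ≤ ε := by nlinarith
  have hR'ε : -R' ≤ ε^2 * Real.sqrt p2 := by
    have h1 : R'^2 ≤ (ε^2 * Real.sqrt p2)^2 := by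
      have h2 : (ε^2 * Real.sqrt p2)^2 = ε^2 * (ε^2 * p2) := by
        rw [mul_pow, hsp2]; ring
      have h3 : H * M' ≤ ε^2 * (ε^2*p2) :=
        calc H * M' ≤ ε^2 * M' := mul_le_mul_of_nonneg_right hH hM0
          _ ≤ ε^2 * (ε^2*p2) := mul_le_mul_of_nonneg_left hM (sq_nonneg ε)
      linarith
    nlinarith [mul_nonneg (sq_nonneg ε) hsp0, sq_nonneg R']
  have hR'3 : -R' ≤ ε^3 := by nlinarith [mul_le_mul_of_nonneg_left hsp (sq_nonneg ε)]
  have E1 : (σ^2 + 2*σ*e + H + p2 - 5*ι*ε^3) * (1 + ι^2*p2)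
      = σ^2 + 2*σ*e + H + 2*p2 - 5*ι*ε^3 + 2*e*(ι*p2) + (H+p2)*(ι^2*p2) - 5*ι^3*ε^3*p2 := by
    linear_combination (p2*(ι*σ+1) + 2*e*ι*p2) * hι
  have E2 : σ^2 + 2*σ*(e + ι*p2) + (H + 2*ι*R' + ι^2*M')
      = σ^2 + 2*σ*e + 2*p2 + H + 2*ι*R' + ι^2*M' := by
    linear_combination (2*p2) * hι
  rw [E1, E2]
  have g1 : -(2*ι*ε^3) ≤ 2*ι*R' := by
    nlinarith [mul_le_mul_of_nonneg_left hR'3 (by linarith : (0:ℝ) ≤ 2*ι)]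
  have g2 : 2*e*(ι*p2) ≤ 2*ι*ε^3 := by
    have heε : e ≤ ε := by nlinarith
    have i1 : 2*e*(ι*p2) ≤ 2*ε*(ι*p2) := by
      nlinarith [mul_le_mul_of_nonneg_right heε (by positivity : (0:ℝ) ≤ 2*(ι*p2))]
    have i2 : 2*ε*(ι*p2) ≤ 2*ε*(ι*ε^2) := by
      nlinarith [mul_le_mul_of_nonneg_left hp2ε (by positivity : (0:ℝ) ≤ 2*ε*ι)]
    nlinarith [i1, i2]
  have g3 : (H+p2)*(ι^2*p2) ≤ (1/2)*ι*ε^3 := by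
    have i1 : (H+p2)*(ι^2*p2) ≤ 2*ε^2*(ι^2*ε^2) := by
      nlinarith [mul_le_mul (by linarith : H+p2 ≤ 2*ε^2)
        (by nlinarith [mul_le_mul_of_nonneg_left hp2ε (sq_nonneg ι)] : ι^2*p2 ≤ ι^2*ε^2)
        (by positivity) (by positivity)]
    have i2 : 2*ε^2*(ι^2*ε^2) = 2*(ι*ε)*(ι*ε^3) := by ring
    have i3 : 2*(ι*ε)*(ι*ε^3) ≤ 2*(1/4)*(ι*ε^3) := by
      nlinarith [mul_le_mul_of_nonneg_right hιε (by positivity : (0:ℝ) ≤ 2*(ι*ε^3))]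
    nlinarith [i1, i2, i3]
  have g4 : (0:ℝ) ≤ ι^3*ε^3*p2 := by positivity
  have g5 : (0:ℝ) ≤ ι^2*M' := by positivity
  have g6 : (0:ℝ) ≤ ι*ε^3 := by positivity
  linarith

/-- for `C = σuvᵀ` (with `σ > 0` and `u, v` unit) the squared
Frobenius distance of `C + E` from its best rank-one approximation, which by
Eckart–Young–Mirsky equals `‖C+E‖_F² − ‖C+E‖_op²`, satisfies
`| (‖C+E‖_F² − ‖C+E‖_op²) − ‖(I−uuᵀ)E(I−vvᵀ)‖_F² | ≤ Λ‖E‖_F³`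
for `‖E‖_F ≤ δ`, for some `δ > 0` and `Λ ≥ 0`. -/
theorem statement10 (M N : ℕ) (u : Fin M → ℝ) (v : Fin N → ℝ)
    (hu : vnormSq u = 1) (hv : vnormSq v = 1) (σ : ℝ) (hσ : 0 < σ)
    (C : Matrix (Fin M) (Fin N) ℝ) (hC : C = σ • vecMulVec u v) :
    ∃ δ : ℝ, 0 < δ ∧ ∃ Λ : ℝ, 0 ≤ Λ ∧
      ∀ E : Matrix (Fin M) (Fin N) ℝ, Real.sqrt (frobSq E) ≤ δ →
        |(frobSq (C + E) - opNorm (C + E) ^ 2)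
            - frobSq ((1 - vecMulVec u u) * E * (1 - vecMulVec v v))|
          ≤ Λ * Real.sqrt (frobSq E) ^ 3 := by
  subst hC
  refine ⟨σ/4, by positivity, 11/σ, by positivity, ?_⟩
  intro E hEδ
  set A : Matrix (Fin M) (Fin N) ℝ := σ • vecMulVec u v + E with hAdef
  set ε : ℝ := Real.sqrt (frobSq E) with hεdef
  have hε0 : 0 ≤ ε := Real.sqrt_nonneg _
  have hε2 : ε^2 = frobSq E := Real.sq_sqrt (frobSq_nonneg E)
  set g : Fin N → ℝ := fun j => ∑ i, E i j * u i with hgdef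
  set h : Fin M → ℝ := E.mulVec v with hhdef
  set e : ℝ := ip u h with hedef
  set H : ℝ := vnormSq h with hHdef
  have hgv : ip g v = e := by rw [hgdef, hedef, hhdef]; exact ip_swap E u v
  set g' : Fin N → ℝ := fun j => g j - e * v j with hg'def
  set p2 : ℝ := vnormSq g - e^2 with hp2def
  -- basic bounds
  have hH0 : 0 ≤ H := vnormSq_nonneg _
  have hHε : H ≤ ε^2 := by
    rw [hHdef, hhdef, hε2]
    calc vnormSq (E.mulVec v) ≤ frobSq E * vnormSq v := vnormSq_mulVec_le E v
      _ = frobSq E := by rw [hv, mul_one]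
  have hGε : vnormSq g ≤ ε^2 := by
    rw [hgdef, g_eq_transpose_mulVec, hε2]
    calc vnormSq (Eᵀ.mulVec u) ≤ frobSq Eᵀ * vnormSq u := vnormSq_mulVec_le Eᵀ u
      _ = frobSq E := by rw [hu, mul_one, transpose_frob]
  have he2 : e^2 ≤ ε^2 := by
    have h1 : e^2 ≤ vnormSq u * vnormSq h := by rw [hedef]; exact ip_sq_le u h
    rw [hu, one_mul] at h1
    exact le_trans h1 hHε
  have hp20 : 0 ≤ p2 := by
    have h1 : e^2 ≤ vnormSq g * vnormSq v := by rw [← hgv]; exact ip_sq_le g v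
    rw [hv, mul_one] at h1
    rw [hp2def]; linarith
  have hp2ε : p2 ≤ ε^2 := by
    rw [hp2def]; have := sq_nonneg e; linarith
  have hε3 : 0 ≤ ε^3 := by positivity
  have hg'2 : vnormSq g' = p2 := by
    have h1 : vnormSq g' = vnormSq (fun j => (-e) * v j + g j) := by
      rw [hg'def]; congr 1; funext j; ring
    rw [h1, vnormSq_decomp, hv, ip_comm, hgv, hp2def]
    ring
  set p : ℝ := Real.sqrt p2 with hpdef
  have hpsq : p^2 = p2 := Real.sq_sqrt hp20
  have hp0 : 0 ≤ p := Real.sqrt_nonneg _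
  have hpε : p ≤ ε := by nlinarith
  have hεσ : ε ≤ σ/4 := hEδ
  -- ===================== UPPER BOUND on opNorm² =====================
  set U : ℝ := σ^2 + 2*σ*e + H + p2 + 11/σ*ε^3 with hUdef
  have hU0 : 0 ≤ U := by
    have hK0 : (0:ℝ) ≤ 11/σ*ε^3 := by positivity
    have heε : -ε ≤ e := by nlinarith
    rw [hUdef]; nlinarith
  have hub : ∀ x : Fin N → ℝ, vnormSq x = 1 → vnormSq (A.mulVec x) ≤ U := by
    intro x hx
    set α : ℝ := ip v x with hαdef
    set y : Fin N → ℝ := fun j => x j - α * v j with hydef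
    have hvy : ip v y = 0 := by
      have h1 : ip v y = ip v (fun j => (-α) * v j + x j) := by
        rw [hydef]; congr 1; funext j; ring
      rw [h1, ip_lin]
      have : ip v v = 1 := by rw [ip_self, hv]
      rw [this, ← hαdef]; ring
    have hyv : vnormSq y = 1 - α^2 := by
      have h1 : vnormSq y = vnormSq (fun j => (-α) * v j + x j) := by
        rw [hydef]; congr 1; funext j; ring
      rw [h1, vnormSq_decomp, hv, hx, ← hαdef]
      ring
    have hα1 : α^2 ≤ 1 := by
      have := vnormSq_nonneg y; rw [hyv] at this; linarith
    set t : ℝ := Real.sqrt (1 - α^2) with htdef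
    have ht0 : 0 ≤ t := Real.sqrt_nonneg _
    have ht2 : t^2 = 1 - α^2 := Real.sq_sqrt (by linarith)
    have hαt : α^2 + t^2 = 1 := by rw [ht2]; ring
    set w : Fin M → ℝ := E.mulVec y with hwdef
    set P : ℝ := ip g' y with hPdef
    set R : ℝ := ip h w with hRdef
    set W : ℝ := vnormSq w with hWdef
    have hW0 : 0 ≤ W := vnormSq_nonneg _
    have hW : W ≤ ε^2 * t^2 := by
      rw [hWdef, hwdef]
      calc vnormSq (E.mulVec y) ≤ frobSq E * vnormSq y := vnormSq_mulVec_le E y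
        _ = ε^2 * t^2 := by rw [hyv, ← hε2, ht2]
    have hP2 : P^2 ≤ p2 * t^2 := by
      have h1 : P^2 ≤ vnormSq g' * vnormSq y := by rw [hPdef]; exact ip_sq_le g' y
      rw [hg'2, hyv, ← ht2] at h1
      exact h1
    have hR2 : R^2 ≤ ε^2 * W := by
      have h1 : R^2 ≤ vnormSq h * vnormSq w := by rw [hRdef]; exact ip_sq_le h w
      rw [← hHdef, ← hWdef] at h1
      calc R^2 ≤ H * W := h1
        _ ≤ ε^2 * W := mul_le_mul_of_nonneg_right hHε hW0
    -- decomposition of ‖Ax‖²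
    have hxsplit : ∀ j, x j = α * v j + y j := fun j => by rw [hydef]; ring
    have hEx : ∀ i, E.mulVec x i = α * h i + w i := by
      intro i
      have h1 : E.mulVec x i = E.mulVec (fun j => α * v j + y j) i := by
        congr 1; funext j; exact hxsplit j
      rw [h1, mulVec_lin, hhdef, hwdef]
    have hAx : A.mulVec x = fun i => (σ*α) * u i + (α * h i + w i) := by
      funext i
      rw [hAdef, Matrix.add_mulVec, Pi.add_apply, rankone_mulVec, ← hαdef, hEx]
    have hipuw : ip u w = P := by
      have h1 : ip u w = ip g y := by rw [hwdef, hgdef]; exact (ip_swap E u y).symm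
      have h2 : ∀ j, g j = e * v j + g' j := fun j => by rw [hg'def]; ring
      have h3 : ip g y = ip y g := ip_comm _ _
      have h4 : ip y g = ip y (fun j => e * v j + g' j) := by
        congr 1; funext j; exact h2 j
      rw [h1, h3, h4, ip_lin, ip_comm y v, hvy, ip_comm y g', ← hPdef]
      ring
    have hAx2 : vnormSq (A.mulVec x) = σ^2*α^2 + 2*σ*α*(α*e + P) + (α^2*H + 2*α*R + W) := by
      rw [hAx, vnormSq_decomp, hu]
      have h5 : ip u (fun i => α * h i + w i) = α * e + P := by
        rw [ip_lin, ← hedef, hipuw]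
      have h6 : vnormSq (fun i => α * h i + w i) = α^2*H + 2*α*R + W := by
        rw [vnormSq_decomp, ← hHdef, ← hRdef, ← hWdef]
      rw [h5, h6]
      ring
    rw [hAx2, hUdef]
    exact upper_endgame σ ε e H p2 p α t P R W hσ hε0 hεσ he2 hH0 hHε hp0 hpε hpsq
      hαt ht0 hP2 hW0 hW hR2
  have hople : opNorm A ^ 2 ≤ U := sq_opNorm_le A U hU0 hub
  -- ===================== LOWER BOUND on opNorm² =====================
  set L : ℝ := σ^2 + 2*σ*e + H + p2 - 5*σ⁻¹*ε^3 with hLdef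
  set z : Fin N → ℝ := fun j => σ⁻¹ * g' j + v j with hzdef
  set m : Fin M → ℝ := E.mulVec g' with hmdef
  set R' : ℝ := ip h m with hR'def
  set M' : ℝ := vnormSq m with hM'def
  have hM0 : 0 ≤ M' := vnormSq_nonneg _
  have hM : M' ≤ ε^2 * p2 := by
    rw [hM'def, hmdef]
    calc vnormSq (E.mulVec g') ≤ frobSq E * vnormSq g' := vnormSq_mulVec_le E g'
      _ = ε^2 * p2 := by rw [hg'2, hε2]
  have hR2' : R'^2 ≤ H * M' := by
    have h1 : R'^2 ≤ vnormSq h * vnormSq m := by rw [hR'def]; exact ip_sq_le h m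
    rw [← hHdef, ← hM'def] at h1
    exact h1
  have hι : σ⁻¹ * σ = 1 := inv_mul_cancel₀ (ne_of_gt hσ)
  have hι0 : (0:ℝ) ≤ σ⁻¹ := by positivity
  have hipvg' : ip v g' = 0 := by
    have h1 : ip v g' = ip v (fun j => (-e) * v j + g j) := by
      congr 1; funext j; rw [hg'def]; ring
    rw [h1, ip_lin]
    have h2 : ip v v = 1 := by rw [ip_self, hv]
    rw [h2, ip_comm v g, hgv]
    ring
  have hipg'g' : ip g' g' = p2 := by
    have : ip g' g' = vnormSq g' := by
      unfold ip vnormSq; exact Finset.sum_congr rfl fun j _ => (sq (g' j)).symm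
    rw [this, hg'2]
  have hzn : vnormSq z = 1 + σ⁻¹^2*p2 := by
    rw [hzdef, vnormSq_decomp, hv, ip_comm g' v, hipvg', hg'2]
    ring
  have hzpos : 0 < vnormSq z := by rw [hzn]; positivity
  have hipvz : ip v z = 1 := by
    rw [hzdef, ip_lin, hipvg']
    have h2 : ip v v = 1 := by rw [ip_self, hv]
    rw [h2]; ring
  have hEz : ∀ i, E.mulVec z i = σ⁻¹ * m i + h i := by
    intro i
    rw [hzdef, mulVec_lin, hmdef, hhdef]
  have hAz : A.mulVec z = fun i => σ * u i + (σ⁻¹ * m i + h i) := by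
    funext i
    rw [hAdef, Matrix.add_mulVec, Pi.add_apply, rankone_mulVec, hipvz, hEz]
    ring
  have hipum : ip u m = p2 := by
    have h1 : ip u m = ip g g' := by rw [hmdef, hgdef]; exact (ip_swap E u g').symm
    have h2 : ip g g' = ip g' g' + e * ip v g' := by
      have h3 : ip g g' = ip g' (fun j => e * v j + g' j) := by
        rw [ip_comm]
        congr 1
        funext j; rw [hg'def]; ring
      rw [h3, ip_lin, ip_comm g' v]
      ring
    rw [h1, h2, hipg'g', hipvg']
    ring
  have hAz2 : vnormSq (A.mulVec z) = σ^2 + 2*σ*(e + σ⁻¹*p2) + (H + 2*σ⁻¹*R' + σ⁻¹^2*M') := by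
    rw [hAz]
    have h4 : (fun i => σ * u i + (σ⁻¹ * m i + h i))
        = fun i => σ * u i + (σ⁻¹ * m i + h i) := rfl
    rw [vnormSq_decomp, hu]
    have h5 : ip u (fun i => σ⁻¹ * m i + h i) = σ⁻¹ * p2 + e := by
      rw [ip_lin, hipum, ← hedef]
    have h6 : vnormSq (fun i => σ⁻¹ * m i + h i) = σ⁻¹^2*M' + 2*σ⁻¹*(ip m h) + H := by
      rw [vnormSq_decomp, ← hM'def, ← hHdef]
    rw [h5, h6, ip_comm m h, ← hR'def]
    ring
  have hlow : L * vnormSq z ≤ vnormSq (A.mulVec z) := by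
    rw [hzn, hAz2, hLdef]
    exact lower_endgame σ ε e H p2 R' M' σ⁻¹ hσ hε0 hεσ he2 hH0 hHε hp20 hp2ε
      hM0 hM hR2' hι hι0
  -- normalize the test vector
  set c : ℝ := (Real.sqrt (vnormSq z))⁻¹ with hcdef
  have hc2 : c^2 = (vnormSq z)⁻¹ := by
    rw [hcdef, ← Real.sqrt_inv, Real.sq_sqrt (by positivity)]
  set x0 : Fin N → ℝ := fun j => c * z j with hx0def
  have hx0 : vnormSq x0 = 1 := by
    rw [hx0def, vnormSq_smul, hc2]
    exact inv_mul_cancel₀ (ne_of_gt hzpos)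
  have hAx0 : vnormSq (A.mulVec x0) = (vnormSq z)⁻¹ * vnormSq (A.mulVec z) := by
    have h1 : A.mulVec x0 = fun i => c * (A.mulVec z i) := by
      funext i; rw [hx0def]; exact mulVec_smul' A c z i
    rw [h1, vnormSq_smul, hc2]
  have hopge : L ≤ opNorm A ^ 2 := by
    have h1 : L ≤ vnormSq (A.mulVec x0) := by
      rw [hAx0, inv_mul_eq_div, le_div_iff₀ hzpos]
      exact hlow
    exact le_trans h1 (sq_opNorm_ge A x0 hx0)
  -- ===================== COMBINE =====================
  have hfa : frobSq A = σ^2 + 2*σ*e + ε^2 := by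
    rw [hAdef, frob_expand u v hu hv σ E, hε2, hedef, hhdef]
  have hfp : frobSq ((1 - vecMulVec u u) * E * (1 - vecMulVec v v)) = ε^2 - H - p2 := by
    rw [frob_proj u v hu hv E, hε2, hp2def, hHdef, hhdef, hgdef, hedef]
    ring
  have h5le11 : 5*σ⁻¹*ε^3 ≤ 11/σ*ε^3 := by
    rw [inv_eq_one_div]
    have h1 : 0 ≤ ε^3/σ := by positivity
    calc 5*(1/σ)*ε^3 = 5*(ε^3/σ) := by ring
      _ ≤ 11*(ε^3/σ) := by linarith
      _ = 11/σ*ε^3 := by ring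
  rw [hfp, abs_le]
  constructor
  · -- lower: uses upper bound on opNorm²
    have : frobSq A - opNorm A ^2 ≥ (σ^2 + 2*σ*e + ε^2) - U := by
      rw [hfa]; linarith
    rw [hUdef] at this
    linarith
  · -- upper: uses lower bound on opNorm²
    have : frobSq A - opNorm A ^2 ≤ (σ^2 + 2*σ*e + ε^2) - L := by
      rw [hfa]; linarith
    rw [hLdef] at this
    linarith

end
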